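/- Let (α,β) and (α′,β′) be dynamical cocycles of a symmetric rack (X,ρ) over a family of sets S = {S_x}_{x∈X}. Then there exists an isomorphism of symmetric racks T: X ×_{(α,β)} S → X ×_{(α′,β′)} S satisfying p ∘ T = p, where p(x,s) = x is the natural projection, if and only if (α,β) and (α′,β′) are cohomologous. -/

import Mathlib

/-- A binary operation is a rack operation. -/
def IsRackOp {Y : Type*} (m : Y → Y → Y) : Prop :=
  (∀ a b c, m (m a b) c = m (m a c) (m b c)) ∧ ∀ b, Function.Bijective (fun a => m a b)

/-- `r` is a good involution on the rack `(Y, m)`. -/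
def IsGoodInv {Y : Type*} (m : Y → Y → Y) (r : Y → Y) : Prop :=
  (∀ a, r (r a) = a) ∧ (∀ a b, r (m a b) = m (r a) b) ∧ (∀ a b, m (m a (r b)) b = a)

/-- The binary operation `(x,s)*(y,t) = (x*y, α x y s t)` on `X × S`. -/
def extOp {X : Type*} (op : X → X → X) (S : X → Type*)
    (α : ∀ x y, S x → S y → S (op x y)) : Sigma S → Sigma S → Sigma S :=
  fun p q => ⟨op p.1 q.1, α p.1 q.1 p.2 q.2⟩

/-- The involution `ρ_{α,β}(x,s) = (ρ x, β x s)` on `X × S`. -/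
def extRho {X : Type*} (rho : X → X) (S : X → Type*)
    (β : ∀ x, S x → S (rho x)) : Sigma S → Sigma S :=
  fun p => ⟨rho p.1, β p.1 p.2⟩

/-- Conditions (1)–(5) for `(α, β)` to be a dynamical cocycle of the symmetric rack
`(X, op, rho)` over the family of sets `S`. -/
def DynCocycle {X : Type*} (op : X → X → X) (rho : X → X) (S : X → Type*)
    (α : ∀ x y, S x → S y → S (op x y)) (β : ∀ x, S x → S (rho x)) : Prop :=
  (∀ (x y : X) (t : S y), Function.Bijective (fun s : S x => α x y s t)) ∧
  (∀ (x y z : X) (s : S x) (t : S y) (w : S z),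
    (⟨op (op x y) z, α (op x y) z (α x y s t) w⟩ : Sigma S)
      = ⟨op (op x z) (op y z), α (op x z) (op y z) (α x z s w) (α y z t w)⟩) ∧
  (∀ (x y : X) (s : S x) (t : S y),
    (⟨op (rho x) y, α (rho x) y (β x s) t⟩ : Sigma S)
      = ⟨rho (op x y), β (op x y) (α x y s t)⟩) ∧
  (∀ (x : X) (s : S x), (⟨rho (rho x), β (rho x) (β x s)⟩ : Sigma S) = ⟨x, s⟩) ∧
  (∀ (x y : X) (s : S x) (t : S y),
    (⟨op (op x (rho y)) y, α (op x (rho y)) y (α x (rho y) s (β y t)) t⟩ : Sigma S) = ⟨x, s⟩)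

/-- Dynamical cocycles `(α,β)` and `(α′,β′)` are cohomologous: there is a family of
permutations `γ_x` of `S_x` with `α′ x y s t = γ (x*y) (α x y (γ x)⁻¹ s (γ y)⁻¹ t)` and
`β′ x s = γ (ρ x) (β x ((γ x)⁻¹ s))`. -/
def Cohomologous {X : Type*} (op : X → X → X) (rho : X → X) (S : X → Type*)
    (α : ∀ x y, S x → S y → S (op x y)) (β : ∀ x, S x → S (rho x))
    (α' : ∀ x y, S x → S y → S (op x y)) (β' : ∀ x, S x → S (rho x)) : Prop :=
  ∃ γ : ∀ x, S x ≃ S x,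
    (∀ (x y : X) (s : S x) (t : S y),
      α' x y s t = γ (op x y) (α x y ((γ x).symm s) ((γ y).symm t))) ∧
    (∀ (x : X) (s : S x), β' x s = γ (rho x) (β x ((γ x).symm s)))

/-- there is an isomorphism of symmetric racks
`T : X ×_{(α,β)} S → X ×_{(α′,β′)} S` over `X` (i.e. `p ∘ T = p`) if and only if
`(α,β)` and `(α′,β′)` are cohomologous. -/
theorem statement3 {X : Type*} (op : X → X → X) (rho : X → X)
    (hrack : IsRackOp op) (hinv : IsGoodInv op rho)
    (S : X → Type*) (α : ∀ x y, S x → S y → S (op x y)) (β : ∀ x, S x → S (rho x))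
    (α' : ∀ x y, S x → S y → S (op x y)) (β' : ∀ x, S x → S (rho x))
    (hdyn : DynCocycle op rho S α β) (hdyn' : DynCocycle op rho S α' β') :
    (∃ T : Sigma S → Sigma S,
      Function.Bijective T ∧
      (∀ p q, T (extOp op S α p q) = extOp op S α' (T p) (T q)) ∧
      (∀ p, T (extRho rho S β p) = extRho rho S β' (T p)) ∧
      (∀ p, (T p).1 = p.1))
      ↔ Cohomologous op rho S α β α' β' := by
  constructor
  · rintro ⟨T, hbij, hop, hrho, hfib⟩
    -- key: T ⟨x,s⟩ = ⟨x, g x s⟩ for some g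
    have key : ∀ (x : X) (s : S x), ∃ u : S x, T ⟨x, s⟩ = ⟨x, u⟩ := by
      intro x s
      have h := hfib ⟨x, s⟩
      rcases hT : T ⟨x, s⟩ with ⟨a, u⟩
      have ha : a = x := by rw [hT] at h; exact h
      subst ha
      exact ⟨u, rfl⟩
    choose g hg using key
    have ginj : ∀ x, Function.Injective (g x) := by
      intro x s s' h
      have : T ⟨x, s⟩ = T ⟨x, s'⟩ := by rw [hg, hg, h]
      have := hbij.1 this
      simpa using this
    have gsurj : ∀ x, Function.Surjective (g x) := by
      intro x u
      obtain ⟨p, hp⟩ := hbij.2 ⟨x, u⟩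
      have hx : p.1 = x := by
        have := hfib p; rw [hp] at this; exact this.symm
      rcases p with ⟨a, s⟩
      subst hx
      refine ⟨s, ?_⟩
      have := (hg a s).symm.trans hp
      simpa using this
    refine ⟨fun x => Equiv.ofBijective (g x) ⟨ginj x, gsurj x⟩, ?_, ?_⟩
    · intro x y s t
      set e := fun x => Equiv.ofBijective (g x) ⟨ginj x, gsurj x⟩ with he
      have h := hop ⟨x, (e x).symm s⟩ ⟨y, (e y).symm t⟩
      rw [hg, hg] at h
      simp only [extOp] at h
      rw [hg] at h
      have h2 := (Sigma.mk.inj_iff.mp h).2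
      have hgs : g x ((e x).symm s) = s := (e x).apply_symm_apply s
      have hgt : g y ((e y).symm t) = t := (e y).apply_symm_apply t
      rw [hgs, hgt] at h2
      have := eq_of_heq h2
      exact this.symm ▸ rfl
    · intro x s
      set e := fun x => Equiv.ofBijective (g x) ⟨ginj x, gsurj x⟩ with he
      have h := hrho ⟨x, (e x).symm s⟩
      rw [hg] at h
      simp only [extRho] at h
      rw [hg] at h
      have h2 := (Sigma.mk.inj_iff.mp h).2
      have hgs : g x ((e x).symm s) = s := (e x).apply_symm_apply s
      rw [hgs] at h2
      have := eq_of_heq h2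
      exact this.symm ▸ rfl
  · rintro ⟨γ, hα, hβ⟩
    refine ⟨fun p => ⟨p.1, γ p.1 p.2⟩, ?_, ?_, ?_, ?_⟩
    · constructor
      · rintro ⟨x, s⟩ ⟨y, t⟩ h
        obtain ⟨h1, h2⟩ := Sigma.mk.inj_iff.mp h
        subst h1
        have : γ x s = γ x t := eq_of_heq h2
        simpa using (γ x).injective this
      · rintro ⟨x, s⟩
        exact ⟨⟨x, (γ x).symm s⟩, by simp⟩
    · rintro ⟨x, s⟩ ⟨y, t⟩
      simp only [extOp]
      congr 1
      rw [hα x y (γ x s) (γ y t)]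
      simp
      rfl
    · rintro ⟨x, s⟩
      simp only [extRho]
      congr 1
      rw [hβ x (γ x s)]
      simp
      rfl
    · intro p; rfl
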